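/- arXiv:1302.6447 — 2 statements merged into one kernel-verified Lean document; each statement's English description precedes it below -/
import Mathlib

section
/- Let X be a Fréchet space, p a continuous seminorm on X, and M a closed infinite-dimensional subspace of X. The following are equivalent: (1) for every closed subspace E of finite codimension in X, E ∩ M ⊄ ker p; (2) M ∩ ker p has infinite codimension in M. -/
open Filter Topology RCLike

/-- A linear functional on a finite-dimensional subspace on which a seminorm is a norm
is bounded by a multiple of the seminorm. -/
theorem aux_coord_bound {𝕜 V : Type*} [RCLike 𝕜] [AddCommGroup V] [Module 𝕜 V]
    (q : Seminorm 𝕜 V) (W : Submodule 𝕜 V) [FiniteDimensional 𝕜 W]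
    (hq : ∀ w : W, q (w : V) = 0 → w = 0) (ℓ : W →ₗ[𝕜] 𝕜) :
    ∃ C : ℝ, 0 ≤ C ∧ ∀ w : W, ‖ℓ w‖ ≤ C * q (w : V) := by
  letI : NormedAddCommGroup W := AddGroupNorm.toNormedAddCommGroup
    { toFun := fun w => q (w : V)
      map_zero' := by simp
      add_le' := fun a b => map_add_le_add q (a : V) (b : V)
      neg' := fun a => by simp [map_neg_eq_map q]
      eq_zero_of_map_eq_zero' := fun a ha => hq a ha }
  letI : NormedSpace 𝕜 W := ⟨fun c w => by
    change q ((c • w : W) : V) ≤ ‖c‖ * q (w : V)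
    rw [Submodule.coe_smul, map_smul_eq_mul]⟩
  let L := LinearMap.toContinuousLinearMap ℓ
  exact ⟨‖L‖, norm_nonneg _, fun w => L.le_opNorm w⟩

theorem seminorm_hahnBanach {𝕜 V : Type*} [RCLike 𝕜] [AddCommGroup V] [Module 𝕜 V]
    (q : Seminorm 𝕜 V) (W : Submodule 𝕜 V) (g : W →ₗ[𝕜] 𝕜) (C : ℝ) (hC : 0 ≤ C)
    (hg : ∀ w : W, ‖g w‖ ≤ C * q (w : V)) :
    ∃ f : V →ₗ[𝕜] 𝕜, (∀ w : W, f (w : V) = g w) ∧ ∀ x, ‖f x‖ ≤ C * q x := by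
  letI : Module ℝ V := Module.compHom V (algebraMap ℝ 𝕜)
  haveI : IsScalarTower ℝ 𝕜 V := ⟨fun r c x => by
    change (r • c) • x = (algebraMap ℝ 𝕜 r) • (c • x)
    rw [Algebra.smul_def, mul_smul]⟩
  have hsmulR : ∀ (r : ℝ) (x : V), r • x = (r : 𝕜) • x := fun r x => by
    rw [RCLike.ofReal_alg, smul_assoc, one_smul]
  -- the real part of g, as a partially defined real-linear map
  let gr : W →ₗ[ℝ] ℝ := RCLike.reLm.comp (g.restrictScalars ℝ)
  obtain ⟨G, hGext, hGle⟩ :=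
    exists_extension_of_le_sublinear ⟨W.restrictScalars ℝ, gr⟩ (fun x => C * q x)
      (fun c hc x => by
        simp only [hsmulR, map_smul_eq_mul, RCLike.norm_ofReal, abs_of_pos hc]
        ring)
      (fun x y => by
        show C * q (x + y) ≤ C * q x + C * q y
        nlinarith [map_add_le_add q x y, apply_nonneg q x, apply_nonneg q y])
      (fun x => by
        change RCLike.re (g x) ≤ C * q (x : V)
        exact (RCLike.re_le_norm _).trans (hg _))
  have hGabs : ∀ x, |G x| ≤ C * q x := fun x => by
    refine abs_le.2 ⟨?_, hGle x⟩
    have := hGle (-x)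
    rw [map_neg, map_neg_eq_map] at this
    linarith
  refine ⟨Module.Dual.extendRCLike G, fun w => ?_, fun x => ?_⟩
  · have e1 : G (w : V) = RCLike.re (g w) := hGext ⟨(w : V), w.2⟩
    have e2 : G ((RCLike.I : 𝕜) • (w : V)) = RCLike.re ((RCLike.I : 𝕜) * g w) := by
      have h1 : ((RCLike.I : 𝕜) • (w : V)) = (((RCLike.I : 𝕜) • w : W) : V) := rfl
      rw [h1]
      have := hGext ⟨(((RCLike.I : 𝕜) • w : W) : V), ((RCLike.I : 𝕜) • w : W).2⟩
      rw [this]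
      change RCLike.re (g ((RCLike.I : 𝕜) • w)) = _
      rw [map_smul, smul_eq_mul]
    rw [LinearMap.extendTo𝕜'_apply, e1, e2, RCLike.I_mul_re, RCLike.ofReal_neg, mul_neg,
      sub_neg_eq_add, mul_comm (RCLike.I : 𝕜), re_add_im]
  · by_cases h0 : (Module.Dual.extendRCLike G x : 𝕜) = 0
    · rw [h0, norm_zero]; positivity
    · have hsq := G.norm_extendTo𝕜'_apply_sq (𝕜 := 𝕜) x
      have h1 := hGle ((starRingEnd 𝕜) (Module.Dual.extendRCLike G x) • x)
      rw [map_smul_eq_mul q, RCLike.norm_conj] at h1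
      have hpos : 0 < ‖(Module.Dual.extendRCLike G x : 𝕜)‖ := norm_pos_iff.2 h0
      have hqx : 0 ≤ q x := apply_nonneg q x
      nlinarith [hsq, h1]

theorem continuous_of_le_seminorm {𝕜 X : Type*} [RCLike 𝕜] [AddCommGroup X] [Module 𝕜 X]
    [UniformSpace X] [IsUniformAddGroup X]
    (p : Seminorm 𝕜 X) (hp : Continuous p) (f : X →ₗ[𝕜] 𝕜) (C : ℝ)
    (hf : ∀ x, ‖f x‖ ≤ C * p x) : Continuous f := by
  have h0 : ContinuousAt f.toAddMonoidHom 0 := by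
    rw [ContinuousAt, map_zero]
    have hq : Filter.Tendsto (fun x => C * p x) (nhds 0) (nhds 0) := by
      have := (hp.tendsto 0).const_mul C
      simpa using this
    exact squeeze_zero_norm (fun x => hf x) hq
  exact continuous_of_continuousAt_zero f.toAddMonoidHom h0

/-- The kernel of a seminorm, as a submodule. -/
def Seminorm.kerSubmodule {𝕜 X : Type*} [NormedField 𝕜] [AddCommGroup X] [Module 𝕜 X]
    (p : Seminorm 𝕜 X) : Submodule 𝕜 X where
  carrier := {x | p x = 0}
  zero_mem' := map_zero p
  add_mem' := by
    intro a b ha hb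
    simp only [Set.mem_setOf_eq] at *
    exact le_antisymm (by simpa [ha, hb] using map_add_le_add p a b) (apply_nonneg p _)
  smul_mem' := by
    intro c x hx
    simp only [Set.mem_setOf_eq] at *
    simp [map_smul_eq_mul, hx]

theorem Seminorm.mem_kerSubmodule_iff {𝕜 X : Type*} [NormedField 𝕜] [AddCommGroup X] [Module 𝕜 X]
    (p : Seminorm 𝕜 X) {x : X} : x ∈ p.kerSubmodule ↔ p x = 0 := Iff.rfl

/-- For a closed infinite-dimensional subspace `M` of a Fréchet space and a continuous
seminorm `p`: `E ⊓ M ⊄ ker p` for every closed finite-codimensional subspace `E` iff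
`M ⊓ ker p` has infinite codimension in `M`. -/
theorem finite_codim_ker_characterization {𝕜 X : Type*} [RCLike 𝕜]
    [AddCommGroup X] [Module 𝕜 X] [UniformSpace X] [IsUniformAddGroup X]
    [ContinuousSMul 𝕜 X] [CompleteSpace X] [T2Space X]
    (pfam : ℕ → Seminorm 𝕜 X) (hpfam : WithSeminorms pfam)
    (p : Seminorm 𝕜 X) (hp : Continuous p)
    (M : Submodule 𝕜 X) (hMc : IsClosed (M : Set X)) (hMinf : ¬ Module.Finite 𝕜 M) :
    (∀ E : Submodule 𝕜 X, IsClosed (E : Set X) → Module.Finite 𝕜 (X ⧸ E) →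
        ¬ (E ⊓ M ≤ p.kerSubmodule)) ↔
      ¬ Module.Finite 𝕜 (↥M ⧸ Submodule.comap M.subtype p.kerSubmodule) := by
  set K : Submodule 𝕜 ↥M := Submodule.comap M.subtype p.kerSubmodule with hK
  constructor
  · -- hard direction
    intro h1 hfin
    -- a complement of K in M
    obtain ⟨W', hW'⟩ := K.exists_isCompl
    haveI : FiniteDimensional 𝕜 W' :=
      LinearEquiv.finiteDimensional (Submodule.quotientEquivOfIsCompl K W' hW')
    set W : Submodule 𝕜 X := W'.map M.subtype with hWdef
    haveI : FiniteDimensional 𝕜 W :=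
      LinearEquiv.finiteDimensional (Submodule.equivMapOfInjective M.subtype M.injective_subtype W')
    -- p is a norm on W
    have hWq : ∀ w : W, p (w : X) = 0 → w = 0 := by
      rintro ⟨x, hx⟩ hpx
      obtain ⟨y, hy, rfl⟩ := hx
      have hyK : y ∈ K := by
        rw [hK, Submodule.mem_comap]
        exact hpx
      have : y ∈ K ⊓ W' := ⟨hyK, hy⟩
      rw [hW'.inf_eq_bot, Submodule.mem_bot] at this
      subst this
      rfl
    -- choose a basis of W
    let ι := Module.Free.ChooseBasisIndex 𝕜 ↥W
    let b : Module.Basis ι 𝕜 ↥W := Module.Free.chooseBasis 𝕜 ↥W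
    have hex : ∀ i : ι, ∃ f : X →ₗ[𝕜] 𝕜, (∀ w : W, f (w : X) = b.coord i w) ∧
        ∃ C : ℝ, ∀ x, ‖f x‖ ≤ C * p x := by
      intro i
      obtain ⟨C, hC0, hCb⟩ := aux_coord_bound p W hWq (b.coord i)
      obtain ⟨f, hf1, hf2⟩ := seminorm_hahnBanach p W (b.coord i) C hC0 hCb
      exact ⟨f, hf1, C, hf2⟩
    choose f hf C hC using hex
    have hcont : ∀ i, Continuous (f i) := fun i =>
      continuous_of_le_seminorm p hp (f i) (C i) (hC i)
    set Φ : X →ₗ[𝕜] (ι → 𝕜) := LinearMap.pi f with hΦ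
    set E := LinearMap.ker Φ with hE
    have hEc : IsClosed (E : Set X) := by
      have : (E : Set X) = ⋂ i, (f i) ⁻¹' {0} := by
        ext x
        simp [hE, LinearMap.mem_ker, funext_iff, hΦ, LinearMap.pi_apply]
      rw [this]
      exact isClosed_iInter fun i => isClosed_singleton.preimage (hcont i)
    haveI hEfin : Module.Finite 𝕜 (X ⧸ E) :=
      LinearEquiv.finiteDimensional Φ.quotKerEquivRange.symm
    refine h1 E hEc hEfin ?_
    rintro x ⟨hxE, hxM⟩
    have hm : (⟨x, hxM⟩ : ↥M) ∈ K ⊔ W' := by rw [hW'.sup_eq_top]; trivial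
    obtain ⟨k, hk, w, hw, hkw⟩ := Submodule.mem_sup.1 hm
    have hpk : p (k : X) = 0 := hk
    have hfk : ∀ i, f i (k : X) = 0 := by
      intro i
      have h1' := hC i (k : X)
      rw [hpk, mul_zero] at h1'
      exact norm_le_zero_iff.1 h1'
    have hfx : ∀ i, f i x = 0 := by
      intro i
      have hΦx : Φ x = 0 := LinearMap.mem_ker.1 hxE
      have := congrFun hΦx i
      simpa [hΦ, LinearMap.pi_apply] using this
    have hxkw : x = (k : X) + (w : X) := (congrArg Subtype.val hkw).symm
    have hcoord : ∀ i, b.coord i ⟨(w : X), Submodule.mem_map_of_mem hw⟩ = 0 := by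
      intro i
      rw [← hf i ⟨(w : X), Submodule.mem_map_of_mem hw⟩]
      have hfw : f i (w : X) = f i x - f i (k : X) := by
        rw [hxkw, map_add]; ring
      show f i (w : X) = 0
      rw [hfw, hfx i, hfk i, sub_zero]
    have hw0 : (⟨(w : X), Submodule.mem_map_of_mem hw⟩ : ↥W) = 0 :=
      b.forall_coord_eq_zero_iff.1 hcoord
    have hwz : (w : X) = 0 := congrArg Subtype.val hw0
    show p x = 0
    rw [hxkw, hwz, add_zero, hpk]

  · -- easy direction
    intro h2 E hEc hEfin hle
    apply h2
    -- M ⧸ comap subtype E is finite-dimensional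
    let ψ : ↥M →ₗ[𝕜] X ⧸ E := E.mkQ.comp M.subtype
    have hker : LinearMap.ker ψ = Submodule.comap M.subtype E := by
      rw [LinearMap.ker_comp, Submodule.ker_mkQ]
    haveI : Module.Finite 𝕜 (↥M ⧸ LinearMap.ker ψ) :=
      LinearEquiv.finiteDimensional ψ.quotKerEquivRange.symm
    haveI : Module.Finite 𝕜 (↥M ⧸ Submodule.comap M.subtype E) := by
      rw [← hker]; infer_instance
    -- comap E ≤ K, so the quotient by K is a further quotient
    have hKE : Submodule.comap M.subtype E ≤ K := by
      intro m hm
      rw [hK, Submodule.mem_comap]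
      exact hle ⟨hm, m.2⟩
    have hsurj : Function.Surjective
        (Submodule.mapQ (Submodule.comap M.subtype E) K LinearMap.id hKE) := by
      intro x
      obtain ⟨m, rfl⟩ := Submodule.Quotient.mk_surjective K x
      exact ⟨Submodule.Quotient.mk m, rfl⟩
    exact Module.Finite.of_surjective _ hsurj
end

section
/- Under the hypotheses u_n ∈ ker p_n \ ker p_{n+1} for all n, the sequence (u_n) is basic: the coefficients in the representation x = ∑_{n=1}^∞ α_n u_n are unique, and coefficient functionals are continuous in the sense that if x_k = ∑_n α_{n,k} u_n converges to x in X, then each (α_{n,k})_k converges to some α_n and x = ∑_n α_n u_n. -/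
open Filter Topology

section Aux

variable {𝕜 X : Type*} [RCLike 𝕜] [AddCommGroup X] [Module 𝕜 X]

lemma ker_add_right' (p : Seminorm 𝕜 X) {x z : X} (hz : p z = 0) : p (x + z) = p x := by
  refine le_antisymm (by simpa [hz] using map_add_le_add p x z) ?_
  have : p x ≤ p (x + z) + p (-z) := by
    simpa using map_add_le_add p (x + z) (-z)
  simpa [map_neg_eq_map, hz] using this

lemma seminorm_sum_le' {ι : Type*} (p : Seminorm 𝕜 X) (s : Finset ι) (f : ι → X) :
    p (∑ i ∈ s, f i) ≤ ∑ i ∈ s, p (f i) := by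
  induction s using Finset.cons_induction with
  | empty => simp
  | cons a s ha ih =>
    simp only [Finset.sum_cons]
    exact (map_add_le_add p _ _).trans (add_le_add le_rfl ih)

lemma sum_ker' (p : Seminorm 𝕜 X) (c : ℕ → 𝕜) (u : ℕ → X) (s : Finset ℕ)
    (h : ∀ n ∈ s, p (u n) = 0) : p (∑ n ∈ s, c n • u n) = 0 := by
  refine le_antisymm ?_ (apply_nonneg _ _)
  calc p (∑ n ∈ s, c n • u n) ≤ ∑ n ∈ s, p (c n • u n) := seminorm_sum_le' p s _
    _ = 0 := by
        apply Finset.sum_eq_zero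
        intro n hn
        rw [map_smul_eq_mul, h n hn, mul_zero]

variable [UniformSpace X] [IsUniformAddGroup X] [ContinuousSMul 𝕜 X]

/-- If the partial sums converge to `x`, then `p m (x - Sₘ) = 0`. -/
lemma rep_ker' (p : ℕ → Seminorm 𝕜 X) (hp : WithSeminorms p)
    (u : ℕ → X) (hker2 : ∀ m n, m ≤ n → p m (u n) = 0)
    (a : ℕ → 𝕜) (x : X)
    (ha : Tendsto (fun N => ∑ n ∈ Finset.range N, a n • u n) atTop (𝓝 x))
    (m : ℕ) : p m (x - ∑ n ∈ Finset.range m, a n • u n) = 0 := by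
  have key : ∀ N, m ≤ N →
      p m ((∑ n ∈ Finset.range N, a n • u n) - x)
        = p m ((∑ n ∈ Finset.range m, a n • u n) - x) := by
    intro N hN
    have e : (∑ n ∈ Finset.range N, a n • u n) - x
        = ((∑ n ∈ Finset.range m, a n • u n) - x) + ∑ n ∈ Finset.Ico m N, a n • u n := by
      rw [Finset.range_eq_Ico, ← Finset.sum_Ico_consecutive _ (Nat.zero_le m) hN,
        ← Finset.range_eq_Ico]
      abel
    rw [e, ker_add_right' _ (sum_ker' _ _ _ _ fun n hn => hker2 m n (Finset.mem_Ico.mp hn).1)]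
  rw [map_sub_rev]
  refine le_antisymm ?_ (apply_nonneg _ _)
  by_contra h
  push_neg at h
  obtain ⟨N, hN1, hN2⟩ :=
    (((hp.tendsto_nhds _ x).mp ha m _ h).and (eventually_ge_atTop m)).exists
  rw [key N hN2] at hN1
  exact lt_irrefl _ hN1

end Aux

/-- If `u n ∈ ker (p n) \ ker (p (n+1))` for all `n` (0-based indexing), then `(u n)` is
basic: coefficients of series representations are unique, and the coefficient functionals
are continuous: if `x k = ∑ n, A k n • u n` converges to `x`, then each coefficient
sequence converges and the limit coefficients represent `x`. -/
theorem kernel_sequence_is_basic {𝕜 X : Type*} [RCLike 𝕜]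
    [AddCommGroup X] [Module 𝕜 X] [UniformSpace X] [IsUniformAddGroup X]
    [ContinuousSMul 𝕜 X] [CompleteSpace X] [T2Space X]
    (p : ℕ → Seminorm 𝕜 X) (hp : WithSeminorms p) (hmono : ∀ n, p n ≤ p (n + 1))
    (u : ℕ → X) (hker : ∀ n, p n (u n) = 0) (hnker : ∀ n, p (n + 1) (u n) ≠ 0) :
    (∀ (a b : ℕ → 𝕜) (x : X),
        Filter.Tendsto (fun N => ∑ n ∈ Finset.range N, a n • u n) Filter.atTop (nhds x) →
        Filter.Tendsto (fun N => ∑ n ∈ Finset.range N, b n • u n) Filter.atTop (nhds x) →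
        a = b) ∧
    (∀ (A : ℕ → ℕ → 𝕜) (xs : ℕ → X) (x : X),
        (∀ k, Filter.Tendsto (fun N => ∑ n ∈ Finset.range N, A k n • u n)
          Filter.atTop (nhds (xs k))) →
        Filter.Tendsto xs Filter.atTop (nhds x) →
        ∃ α : ℕ → 𝕜, (∀ n, Filter.Tendsto (fun k => A k n) Filter.atTop (nhds (α n))) ∧
          Filter.Tendsto (fun N => ∑ n ∈ Finset.range N, α n • u n)
            Filter.atTop (nhds x)) := by
  -- basic monotonicity facts
  have hmono' : Monotone p := monotone_nat_of_le_succ hmono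
  have hker2 : ∀ m n, m ≤ n → p m (u n) = 0 := by
    intro m n h
    refine le_antisymm ?_ (apply_nonneg _ _)
    calc p m (u n) ≤ p n (u n) := hmono' h (u n)
      _ = 0 := hker n
  -- the key uniqueness engine
  have core : ∀ c : ℕ → 𝕜,
      (∀ m, p m (∑ n ∈ Finset.range m, c n • u n) = 0) → ∀ n, c n = 0 := by
    intro c hc n
    induction n using Nat.strong_induction_on with
    | _ n ih =>
      have hsum : ∑ j ∈ Finset.range (n + 1), c j • u j = c n • u n := by
        rw [Finset.sum_range_succ]
        have h0 : ∑ j ∈ Finset.range n, c j • u j = 0 :=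
          Finset.sum_eq_zero fun j hj => by
            rw [ih j (Finset.mem_range.mp hj), zero_smul]
        rw [h0, zero_add]
      have hz := hc (n + 1)
      rw [hsum, map_smul_eq_mul] at hz
      rcases mul_eq_zero.mp hz with h | h
      · exact norm_eq_zero.mp h
      · exact absurd h (hnker n)
  constructor
  · -- uniqueness
    intro a b x ha hb
    have hA := rep_ker' p hp u hker2 a x ha
    have hB := rep_ker' p hp u hker2 b x hb
    have hz : ∀ m, p m (∑ n ∈ Finset.range m, (a n - b n) • u n) = 0 := by
      intro m
      have e : ∑ n ∈ Finset.range m, (a n - b n) • u n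
          = (x - ∑ n ∈ Finset.range m, b n • u n)
            - (x - ∑ n ∈ Finset.range m, a n • u n) := by
        simp only [sub_smul, Finset.sum_sub_distrib]
        abel
      rw [e]
      refine le_antisymm ?_ (apply_nonneg _ _)
      calc p m _ ≤ p m (x - ∑ n ∈ Finset.range m, b n • u n)
          + p m (x - ∑ n ∈ Finset.range m, a n • u n) := map_sub_le_add _ _ _
        _ = 0 := by rw [hA m, hB m, add_zero]
    funext n
    exact sub_eq_zero.mp (core _ hz n)
  · -- continuity of coefficient functionals
    intro A xs x hA hx
    have hrep : ∀ k m, p m (xs k - ∑ n ∈ Finset.range m, A k n • u n) = 0 :=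
      fun k m => rep_ker' p hp u hker2 (A k) (xs k) (hA k) m
    -- differences of xs tend to 0 along the product filter
    have hxs2 : Tendsto (fun q : ℕ × ℕ => xs q.1 - xs q.2) atTop (𝓝 0) := by
      rw [← prod_atTop_atTop_eq]
      have h1 : Tendsto (fun q : ℕ × ℕ => xs q.1) (atTop ×ˢ atTop) (𝓝 x) :=
        hx.comp tendsto_fst
      have h2 : Tendsto (fun q : ℕ × ℕ => xs q.2) (atTop ×ˢ atTop) (𝓝 x) :=
        hx.comp tendsto_snd
      simpa using h1.sub h2
    have hpxs : ∀ m, Tendsto (fun q : ℕ × ℕ => p m (xs q.1 - xs q.2)) atTop (𝓝 0) := by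
      intro m
      have hc := ((hp.continuous_seminorm m).tendsto 0).comp hxs2
      simpa [map_zero, Function.comp_def] using hc
    -- Cauchy property of each coefficient sequence, by strong induction
    have hcau : ∀ n, Tendsto (fun q : ℕ × ℕ => ‖A q.1 n - A q.2 n‖) atTop (𝓝 0) := by
      intro n
      induction n using Nat.strong_induction_on with
      | _ n ih =>
        have hcpos : (0 : ℝ) < p (n + 1) (u n) :=
          (apply_nonneg _ _).lt_of_ne (Ne.symm (hnker n))
        have hbound : ∀ q : ℕ × ℕ, ‖A q.1 n - A q.2 n‖ ≤
            (p (n + 1) (xs q.1 - xs q.2)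
              + ∑ j ∈ Finset.range n, ‖A q.1 j - A q.2 j‖ * p (n + 1) (u j))
              / p (n + 1) (u n) := by
          intro q
          rw [le_div_iff₀ hcpos]
          have e1 : ‖A q.1 n - A q.2 n‖ * p (n + 1) (u n)
              = p (n + 1) ((A q.1 n - A q.2 n) • u n) := (map_smul_eq_mul _ _ _).symm
          rw [e1]
          have e2 : (A q.1 n - A q.2 n) • u n =
              (∑ j ∈ Finset.range (n + 1), (A q.1 j - A q.2 j) • u j)
                - ∑ j ∈ Finset.range n, (A q.1 j - A q.2 j) • u j := by
            rw [Finset.sum_range_succ]; abel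
          rw [e2]
          have hBig : p (n + 1) (∑ j ∈ Finset.range (n + 1), (A q.1 j - A q.2 j) • u j)
              ≤ p (n + 1) (xs q.1 - xs q.2) := by
            have z1 : p (n + 1)
                ((∑ j ∈ Finset.range (n + 1), A q.1 j • u j) - xs q.1) = 0 := by
              rw [map_sub_rev]; exact hrep q.1 (n + 1)
            have z2 : p (n + 1)
                (xs q.2 - ∑ j ∈ Finset.range (n + 1), A q.2 j • u j) = 0 :=
              hrep q.2 (n + 1)
            have e3 : ∑ j ∈ Finset.range (n + 1), (A q.1 j - A q.2 j) • u j
                = ((xs q.1 - xs q.2)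
                    + ((∑ j ∈ Finset.range (n + 1), A q.1 j • u j) - xs q.1))
                  + (xs q.2 - ∑ j ∈ Finset.range (n + 1), A q.2 j • u j) := by
              simp only [sub_smul, Finset.sum_sub_distrib]
              abel
            rw [e3, ker_add_right' _ z2, ker_add_right' _ z1]
          have hSmall : p (n + 1) (∑ j ∈ Finset.range n, (A q.1 j - A q.2 j) • u j)
              ≤ ∑ j ∈ Finset.range n, ‖A q.1 j - A q.2 j‖ * p (n + 1) (u j) := by
            refine (seminorm_sum_le' _ _ _).trans (le_of_eq ?_)
            exact Finset.sum_congr rfl fun j _ => map_smul_eq_mul _ _ _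
          exact (map_sub_le_add _ _ _).trans (add_le_add hBig hSmall)
        have hlim : Tendsto (fun q : ℕ × ℕ =>
            (p (n + 1) (xs q.1 - xs q.2)
              + ∑ j ∈ Finset.range n, ‖A q.1 j - A q.2 j‖ * p (n + 1) (u j))
              / p (n + 1) (u n)) atTop (𝓝 0) := by
          have h2 : Tendsto (fun q : ℕ × ℕ =>
              ∑ j ∈ Finset.range n, ‖A q.1 j - A q.2 j‖ * p (n + 1) (u j))
              atTop (𝓝 0) := by
            have := tendsto_finset_sum (Finset.range n)
              (fun j hj => (ih j (Finset.mem_range.mp hj)).mul_const (p (n + 1) (u j)))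
            simpa using this
          simpa using ((hpxs (n + 1)).add h2).div_const (p (n + 1) (u n))
        exact squeeze_zero (fun q => norm_nonneg _) hbound hlim
    -- each coefficient sequence converges
    have hconv : ∀ n, ∃ L : 𝕜, Tendsto (fun k => A k n) atTop (𝓝 L) := by
      intro n
      refine cauchySeq_tendsto_of_complete ?_
      rw [cauchySeq_iff_tendsto_dist_atTop_0]
      simpa [dist_eq_norm] using hcau n
    choose α hα using hconv
    refine ⟨α, hα, ?_⟩
    -- the limit coefficients represent x
    have hTm : ∀ m, p m (x - ∑ n ∈ Finset.range m, α n • u n) = 0 := by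
      intro m
      have hS : Tendsto (fun k => xs k - ∑ n ∈ Finset.range m, A k n • u n) atTop
          (𝓝 (x - ∑ n ∈ Finset.range m, α n • u n)) :=
        hx.sub (tendsto_finset_sum _ fun n _ => (hα n).smul_const (u n))
      have h1 := ((hp.continuous_seminorm m).tendsto _).comp hS
      have h2 : Tendsto (fun k => p m (xs k - ∑ n ∈ Finset.range m, A k n • u n))
          atTop (𝓝 0) := by
        simp only [hrep]
        exact tendsto_const_nhds
      exact tendsto_nhds_unique h1 h2
    rw [hp.tendsto_nhds]
    intro m ε hε
    filter_upwards [eventually_ge_atTop m] with N hN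
    have hz : p m ((∑ n ∈ Finset.range N, α n • u n) - x) = 0 := by
      have e : (∑ n ∈ Finset.range N, α n • u n) - x
          = ((∑ n ∈ Finset.range m, α n • u n) - x) + ∑ n ∈ Finset.Ico m N, α n • u n := by
        rw [Finset.range_eq_Ico, ← Finset.sum_Ico_consecutive _ (Nat.zero_le m) hN,
          ← Finset.range_eq_Ico]
        abel
      rw [e, ker_add_right' _ (sum_ker' _ _ _ _ fun n hn => hker2 m n (Finset.mem_Ico.mp hn).1),
        map_sub_rev]
      exact hTm m
    rw [hz]
    exact hε
end
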